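/- Let G = (V,E) be a simple graph with minimum degree at least two and let X ⊆ E with |X| = k be a feedback edge set of G, i.e., the graph G − X obtained by deleting the edges of X is a forest. Then G has at most 7k maximal paths. -/

import Mathlib

/-- The degree of a vertex (number of neighbors). -/
noncomputable def deg {V : Type*} (G : SimpleGraph V) (w : V) : ℕ :=
  (G.neighborSet w).ncard

/-- A maximal path: a path on at least two vertices (at least one edge) all of whose inner
vertices have degree exactly two in G, whose endpoints each have degree at least three or
exactly two in G but not both degree two, and which cannot be extended at a degree-two
endpoint. -/
def IsMaximalPath {V : Type*} (G : SimpleGraph V) {u v : V} (p : G.Walk u v) : Prop :=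
  p.IsPath ∧ 1 ≤ p.length ∧
  (∀ w ∈ p.support, w ≠ u → w ≠ v → deg G w = 2) ∧
  ((3 ≤ deg G u ∧ 3 ≤ deg G v) ∨ (3 ≤ deg G u ∧ deg G v = 2) ∨
    (deg G u = 2 ∧ 3 ≤ deg G v)) ∧
  (deg G u = 2 → ∀ x : V, G.Adj u x → x ∈ p.support) ∧
  (deg G v = 2 → ∀ x : V, G.Adj v x → x ∈ p.support)

/-- The set of maximal paths of G, where each (undirected) maximal path is represented by
its set of edges. -/
def maximalPathEdgeSets {V : Type*} (G : SimpleGraph V) : Set (Set (Sym2 V)) :=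
  {s | ∃ (u v : V) (p : G.Walk u v), IsMaximalPath G p ∧ s = {e | e ∈ p.edges}}

open SimpleGraph

section helpers

variable {V : Type*} {G : SimpleGraph V}

private lemma ncard_le_of_rel {α β : Type*} {A : Set α} {D : Set β} (hD : D.Finite)
    (P : α → β → Prop) (h1 : ∀ s ∈ A, ∃ d ∈ D, P s d)
    (h2 : ∀ s1 s2 d, d ∈ D → P s1 d → P s2 d → s1 = s2) :
    A.ncard ≤ D.ncard := by
  classical
  rcases A.eq_empty_or_nonempty with h | ⟨s0, hs0⟩
  · simp [h]
  have hβ : Nonempty β := ⟨(h1 s0 hs0).choose⟩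
  set f : α → β := fun s => if h : s ∈ A then (h1 s h).choose else Classical.arbitrary β with hf
  refine Set.ncard_le_ncard_of_injOn f (fun a ha => ?_) (fun a ha b hb hab => ?_) hD
  · simp only [hf, dif_pos ha]
    exact (h1 a ha).choose_spec.1
  · have hPa := (h1 a ha).choose_spec
    have hPb := (h1 b hb).choose_spec
    simp only [hf, dif_pos ha, dif_pos hb] at hab
    exact h2 a b _ hPa.1 hPa.2 (by rw [hab]; exact hPb.2)

private lemma edge_start_unique {x r y z : V} (p : G.Walk x r) (hp : p.IsPath)
    (hy : s(x, y) ∈ p.edges) (hz : s(x, z) ∈ p.edges) : y = z := by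
  cases p with
  | nil => simp at hy
  | @cons _ w _ h q =>
    rw [Walk.cons_isPath_iff] at hp
    have key : ∀ t, s(x, t) ∈ (Walk.cons h q).edges → t = w := by
      intro t ht
      rw [Walk.edges_cons, List.mem_cons] at ht
      rcases ht with ht | ht
      · rw [Sym2.eq_iff] at ht
        rcases ht with ⟨-, rfl⟩ | ⟨hxw, rfl⟩
        · rfl
        · exact absurd hxw h.ne
      · exact absurd (Walk.fst_mem_support_of_mem_edges q ht) hp.2
    rw [key y hy, key z hz]

end helpers


section forest
variable {V : Type*} [Fintype V] {G : SimpleGraph V}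

private lemma isAcyclic_ncard_edgeSet (h : G.IsAcyclic) (v0 : V) :
    G.edgeSet.ncard + 1 ≤ Fintype.card V := by
  classical
  set R : V → V := fun v => (G.connectedComponentMk v).out with hRdef
  have hout : ∀ c : G.ConnectedComponent, G.connectedComponentMk c.out = c :=
    fun c => c.out_eq
  have hreach : ∀ v, G.Reachable (R v) v := fun v => ConnectedComponent.eq.mp (hout _)
  have hRcongr : ∀ {a b : V}, G.Reachable a b → R a = R b := by
    intro a b hab
    simp only [hRdef]
    rw [ConnectedComponent.eq.mpr hab]
  let pa : ∀ v : V, G.Path v (R v) := fun v => (hreach v).symm.some.toPath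
  -- key fact about roots
  have hRroot : ∀ x, x = R v0 → ∀ e, e ∉ (pa x).1.edges := by
    intro x hx e he
    have hxx : R x = x := by
      rw [hx, hRcongr (hreach v0)]
    let q : G.Walk x x := (pa x).1.copy rfl hxx
    have hq : q = Walk.nil := (Walk.isPath_iff_eq_nil (p := q)).mp ((Walk.isPath_copy _ rfl hxx).mpr (pa x).2)
    have : e ∈ q.edges := by simpa [q, Walk.edges_copy] using he
    rw [hq] at this
    simp at this
  have hn : 1 ≤ Fintype.card V := Fintype.card_pos_iff.mpr ⟨v0⟩
  have hcard : (Set.univ \ {R v0} : Set V).ncard = Fintype.card V - 1 := by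
    rw [Set.ncard_diff (by simp) (Set.toFinite _), Set.ncard_univ, Set.ncard_singleton,
      Nat.card_eq_fintype_card]
  have hmain : G.edgeSet.ncard ≤ (Set.univ \ {R v0} : Set V).ncard := by
    apply ncard_le_of_rel (Set.toFinite _)
      (fun e x => (∃ y, e = s(x, y)) ∧ e ∈ (pa x).1.edges)
    · intro e he
      induction e using Sym2.ind with
      | _ a b =>
        rw [mem_edgeSet] at he
        have hbr := (isAcyclic_iff_forall_adj_isBridge.mp h) he
        rw [isBridge_iff_adj_and_forall_walk_mem_edges] at hbr
        have hRab : R a = R b := hRcongr he.reachable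
        have hew := hbr ((pa a).1.append (((pa b).1.copy rfl hRab.symm).reverse))
        rw [Walk.edges_append, List.mem_append, Walk.edges_reverse, List.mem_reverse,
          Walk.edges_copy] at hew
        rcases hew with hew | hew
        · refine ⟨a, ⟨trivial, ?_⟩, ⟨b, rfl⟩, hew⟩
          simp only [Set.mem_singleton_iff]
          exact fun hh => hRroot a hh _ hew
        · refine ⟨b, ⟨trivial, ?_⟩, ⟨a, Sym2.eq_swap⟩, hew⟩
          simp only [Set.mem_singleton_iff]
          exact fun hh => hRroot b hh _ hew
    · rintro e1 e2 x - ⟨⟨y1, rfl⟩, he1⟩ ⟨⟨y2, rfl⟩, he2⟩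
      rw [edge_start_unique (pa x).1 (pa x).2 he1 he2]
  omega
end forest

section det
variable {V : Type*} [Fintype V] {G : SimpleGraph V}

private lemma aux_nil {a c : V} (q : G.Walk a c) (S : List V) (prev : V)
    (hprev : prev ∈ S) (hadj : G.Adj a prev)
    (hq : q.IsPath) (hdisj : ∀ x ∈ q.support, x ∉ S)
    (hdeg : ∀ x ∈ q.support, x ≠ c → deg G x = 2)
    (hend : 3 ≤ deg G a ∨ (deg G a = 2 ∧ ∀ x, G.Adj a x → x ∈ S ∨ x = a)) :
    q.edges = [] := by
  cases q with
  | nil => rfl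
  | @cons _ w _ h' q' =>
    rw [Walk.cons_isPath_iff] at hq
    have hac : a ≠ c := fun hh => hq.2 (hh ▸ q'.end_mem_support)
    have hdeg2 : deg G a = 2 := hdeg a (by simp) hac
    rcases hend with h3 | ⟨-, hall⟩
    · omega
    · rcases hall _ h' with hS | rfl
      · exact absurd hS (hdisj _ (by simp))
      · exact absurd rfl h'.ne

private lemma aux_det : ∀ (n : ℕ) (S : List V) {a b c : V} (p : G.Walk a b)
    (q : G.Walk a c) (prev : V),
    p.length ≤ n → prev ∈ S → G.Adj a prev →
    p.IsPath → (∀ x ∈ p.support, x ∉ S) →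
    (∀ x ∈ p.support, x ≠ b → deg G x = 2) →
    (3 ≤ deg G b ∨ (deg G b = 2 ∧ ∀ x, G.Adj b x → x ∈ S ∨ x ∈ p.support)) →
    q.IsPath → (∀ x ∈ q.support, x ∉ S) →
    (∀ x ∈ q.support, x ≠ c → deg G x = 2) →
    (3 ≤ deg G c ∨ (deg G c = 2 ∧ ∀ x, G.Adj c x → x ∈ S ∨ x ∈ q.support)) →
    p.edges = q.edges := by
  intro n
  induction n with
  | zero =>
    intro S a b c p q prev hlen hprev hadj hp hpd hpdeg hpend hq hqd hqdeg hqend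
    cases p with
    | nil =>
      rw [Walk.edges_nil, eq_comm]
      exact aux_nil q S prev hprev hadj hq hqd hqdeg (by simpa using hpend)
    | cons h p' => simp [Walk.length_cons] at hlen
  | succ n ih =>
    intro S a b c p q prev hlen hprev hadj hp hpd hpdeg hpend hq hqd hqdeg hqend
    cases p with
    | nil =>
      rw [Walk.edges_nil, eq_comm]
      exact aux_nil q S prev hprev hadj hq hqd hqdeg (by simpa using hpend)
    | @cons _ w _ h p' =>
      cases q with
      | nil =>
        rw [Walk.edges_nil]
        exact aux_nil (Walk.cons h p') S prev hprev hadj hp hpd hpdeg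
          (by simpa using hqend)
      | @cons _ w'' _ h' q' =>
        rw [Walk.cons_isPath_iff] at hp hq
        have hab : a ≠ b := fun hh => hp.2 (hh ▸ p'.end_mem_support)
        have hdeg2 : deg G a = 2 := hpdeg a (by simp) hab
        have hwS : w ∉ S := hpd w (by simp)
        have hw''S : w'' ∉ S := hqd w'' (by simp)
        have hwprev : w ≠ prev := fun hh => hwS (hh ▸ hprev)
        have hw''prev : w'' ≠ prev := fun hh => hw''S (hh ▸ hprev)
        have hw : w'' = w := by
          by_contra hne
          have hsub : ({prev, w, w''} : Set V) ⊆ G.neighborSet a := by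
            rintro x (rfl | rfl | rfl)
            · exact hadj
            · exact h
            · exact h'
          have h3 : ({prev, w, w''} : Set V).ncard = 3 := by
            rw [Set.ncard_insert_of_notMem (by simp [hwprev.symm, hw''prev.symm, Ne.symm])
              (Set.toFinite _), Set.ncard_pair (Ne.symm hne)]
          have hle := Set.ncard_le_ncard hsub (Set.toFinite _)
          rw [h3] at hle
          rw [deg] at hdeg2
          omega
        subst hw
        rw [Walk.edges_cons, Walk.edges_cons]
        congr 1
        have hlen' : p'.length ≤ n := by
          rw [Walk.length_cons] at hlen; omega
        refine ih (a :: S) p' q' a hlen' (by simp) h.symm hp.1 ?_ ?_ ?_ hq.1 ?_ ?_ ?_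
        · intro x hx
          simp only [List.mem_cons, not_or]
          exact ⟨fun hh => hp.2 (hh ▸ hx), hpd x (by simp [hx])⟩
        · exact fun x hx hxb => hpdeg x (by simp [hx]) hxb
        · rcases hpend with h3 | ⟨h2, hall⟩
          · exact Or.inl h3
          · refine Or.inr ⟨h2, fun x hx => ?_⟩
            rcases hall x hx with hS | hsup
            · exact Or.inl (by simp [hS])
            · rw [Walk.support_cons, List.mem_cons] at hsup
              rcases hsup with rfl | hsup
              · exact Or.inl (by simp)
              · exact Or.inr hsup
        · intro x hx
          simp only [List.mem_cons, not_or]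
          exact ⟨fun hh => hq.2 (hh ▸ hx), hqd x (by simp [hx])⟩
        · exact fun x hx hxc => hqdeg x (by simp [hx]) hxc
        · rcases hqend with h3 | ⟨h2, hall⟩
          · exact Or.inl h3
          · refine Or.inr ⟨h2, fun x hx => ?_⟩
            rcases hall x hx with hS | hsup
            · exact Or.inl (by simp [hS])
            · rw [Walk.support_cons, List.mem_cons] at hsup
              rcases hsup with rfl | hsup
              · exact Or.inl (by simp)
              · exact Or.inr hsup

end det
section wrapper
variable {V : Type*} [Fintype V] {G : SimpleGraph V}

private lemma isMaximalPath_reverse {u v : V} {p : G.Walk u v} (h : IsMaximalPath G p) :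
    IsMaximalPath G p.reverse := by
  obtain ⟨h1, h2, h3, h4, h5, h6⟩ := h
  refine ⟨h1.reverse, by rw [Walk.length_reverse]; exact h2, ?_, by tauto, ?_, ?_⟩
  · intro w hw hwv hwu
    rw [Walk.support_reverse, List.mem_reverse] at hw
    exact h3 w hw hwu hwv
  · intro hd x hx
    rw [Walk.support_reverse, List.mem_reverse]
    exact h6 hd x hx
  · intro hd x hx
    rw [Walk.support_reverse, List.mem_reverse]
    exact h5 hd x hx

private lemma maximal_det {u v1 v2 : V} (p : G.Walk u v1) (q : G.Walk u v2)
    (hp : IsMaximalPath G p) (hq : IsMaximalPath G q) (hu : 3 ≤ deg G u)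
    (hsnd : p.getVert 1 = q.getVert 1) : p.edges = q.edges := by
  obtain ⟨hp1, hp2, hp3, hp4, hp5, hp6⟩ := hp
  obtain ⟨hq1, hq2, hq3, hq4, hq5, hq6⟩ := hq
  have hpn : ¬ p.Nil := Walk.not_nil_iff_lt_length.mpr (by omega)
  have hqn : ¬ q.Nil := Walk.not_nil_iff_lt_length.mpr (by omega)
  obtain ⟨w, hadj, p', rfl⟩ := Walk.not_nil_iff.mp hpn
  obtain ⟨w', hadj', q', rfl⟩ := Walk.not_nil_iff.mp hqn
  have hww : w = w' := by
    simpa [Walk.getVert_cons_succ] using hsnd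
  subst hww
  rw [Walk.cons_isPath_iff] at hp1 hq1
  rw [Walk.edges_cons, Walk.edges_cons]
  congr 1
  have huv1 : u ≠ v1 := fun hh => hp1.2 (hh ▸ p'.end_mem_support)
  have huv2 : u ≠ v2 := fun hh => hq1.2 (hh ▸ q'.end_mem_support)
  refine aux_det p'.length [u] p' q' u le_rfl (by simp) hadj.symm hp1.1 ?_ ?_ ?_
    hq1.1 ?_ ?_ ?_
  · intro x hx
    simp only [List.mem_singleton]
    exact fun hh => hp1.2 (hh ▸ hx)
  · intro x hx hxv
    exact hp3 x (by simp [hx]) (fun hh => hp1.2 (hh ▸ hx)) hxv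
  · rcases hp4 with ⟨-, h3v⟩ | ⟨-, h2v⟩ | ⟨h2u, -⟩
    · exact Or.inl h3v
    · refine Or.inr ⟨h2v, fun x hx => ?_⟩
      have := hp6 h2v x hx
      rw [Walk.support_cons, List.mem_cons] at this
      rcases this with rfl | hh
      · exact Or.inl (by simp)
      · exact Or.inr hh
    · omega
  · intro x hx
    simp only [List.mem_singleton]
    exact fun hh => hq1.2 (hh ▸ hx)
  · intro x hx hxv
    exact hq3 x (by simp [hx]) (fun hh => hq1.2 (hh ▸ hx)) hxv
  · rcases hq4 with ⟨-, h3v⟩ | ⟨-, h2v⟩ | ⟨h2u, -⟩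
    · exact Or.inl h3v
    · refine Or.inr ⟨h2v, fun x hx => ?_⟩
      have := hq6 h2v x hx
      rw [Walk.support_cons, List.mem_cons] at this
      rcases this with rfl | hh
      · exact Or.inl (by simp)
      · exact Or.inr hh
    · omega

end wrapper

/-- A graph with minimum degree at least two having a feedback edge set of size k has at
most 7k maximal paths. -/
theorem maximalPath_count_le_of_feedback_edge_set {V : Type*} [Fintype V]
    (G : SimpleGraph V) (hmin : ∀ w : V, 2 ≤ deg G w) (k : ℕ)
    (X : Finset (Sym2 V)) (hXsub : ↑X ⊆ G.edgeSet) (hXcard : X.card = k)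
    (hforest : (G.deleteEdges ↑X).IsAcyclic) :
    (maximalPathEdgeSets G).ncard ≤ 7 * k := by
  classical
  rcases isEmpty_or_nonempty V with hV | hV
  · have hempty : maximalPathEdgeSets G = ∅ := by
      ext s
      simp only [maximalPathEdgeSets, Set.mem_setOf_eq, Set.mem_empty_iff_false, iff_false]
      rintro ⟨u, -⟩
      exact hV.false u
    simp [hempty]
  obtain ⟨v0⟩ := hV
  have hdeg_eq : ∀ w, deg G w = G.degree w := by
    intro w
    rw [deg, Set.ncard_eq_toFinset_card', Set.toFinset_card, card_neighborSet_eq_degree]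
  have hforest_bound := isAcyclic_ncard_edgeSet hforest v0
  have hn : 1 ≤ Fintype.card V := Fintype.card_pos_iff.mpr ⟨v0⟩
  have hm : G.edgeSet.ncard ≤ (Fintype.card V - 1) + k := by
    have hsubE : G.edgeSet ⊆ (G.deleteEdges ↑X).edgeSet ∪ ↑X := by
      intro e he
      by_cases hX : e ∈ (X : Set (Sym2 V))
      · exact Or.inr hX
      · left
        rw [edgeSet_deleteEdges]
        exact ⟨he, hX⟩
    have h1 : G.edgeSet.ncard ≤ ((G.deleteEdges ↑X).edgeSet ∪ ↑X).ncard :=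
      Set.ncard_le_ncard hsubE (Set.toFinite _)
    have h2 := Set.ncard_union_le (G.deleteEdges ↑X).edgeSet (↑X : Set (Sym2 V))
    have h3 : (↑X : Set (Sym2 V)).ncard = k := by
      rw [Set.ncard_coe_finset, hXcard]
    omega
  have hsum : ∑ v : V, G.degree v = 2 * G.edgeSet.ncard := by
    rw [sum_degrees_eq_twice_card_edges]
    congr 1
    rw [Set.ncard_eq_toFinset_card', Set.toFinset_card, ← edgeFinset_card]
  set B := Finset.univ.filter (fun a : V => 3 ≤ G.degree a) with hB
  have hkey : ∑ a : V, (G.degree a - 2) + 2 * Fintype.card V = 2 * G.edgeSet.ncard := by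
    rw [← hsum]
    have hpt : ∀ a : V, G.degree a - 2 + 2 = G.degree a := fun a =>
      Nat.sub_add_cancel (by rw [← hdeg_eq]; exact hmin a)
    calc ∑ a : V, (G.degree a - 2) + 2 * Fintype.card V
        = ∑ a : V, ((G.degree a - 2) + 2) := by
          rw [Finset.sum_add_distrib, Finset.sum_const, Finset.card_univ, smul_eq_mul]
          ring
      _ = ∑ a : V, G.degree a := Finset.sum_congr rfl fun a _ => hpt a
  have hBsum : ∑ a ∈ B, G.degree a ≤ 7 * k := by
    have h1 : ∑ a ∈ B, G.degree a ≤ ∑ a ∈ B, 3 * (G.degree a - 2) := by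
      apply Finset.sum_le_sum
      intro a ha
      rw [hB, Finset.mem_filter] at ha
      omega
    have h2 : ∑ a ∈ B, (G.degree a - 2) ≤ ∑ a : V, (G.degree a - 2) :=
      Finset.sum_le_sum_of_subset (Finset.filter_subset _ _)
    rw [← Finset.mul_sum] at h1
    omega
  set D : Set (V × V) := {d | 3 ≤ G.degree d.1 ∧ G.Adj d.1 d.2} with hD
  have hDfin : D.Finite := Set.toFinite _
  have hDcard : D.ncard ≤ ∑ a ∈ B, G.degree a := by
    rw [Set.ncard_eq_toFinset_card D hDfin]
    rw [Finset.card_eq_sum_card_fiberwise (f := Prod.fst) (t := B)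
      (fun x hx => by
        rw [Finset.mem_coe, Set.Finite.mem_toFinset] at hx
        rw [Finset.mem_coe, hB, Finset.mem_filter]
        exact ⟨Finset.mem_univ _, hx.1⟩)]
    apply Finset.sum_le_sum
    intro a ha
    have hfib : ((hDfin.toFinset.filter (fun x => x.1 = a)).card ≤
        (G.neighborFinset a).card) := by
      apply Finset.card_le_card_of_injOn Prod.snd
      · intro x hx
        rw [Finset.mem_coe, Finset.mem_filter, Set.Finite.mem_toFinset] at hx
        rw [Finset.mem_coe, mem_neighborFinset, ← hx.2]
        exact hx.1.2
      · intro x hx y hy hxy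
        rw [Finset.coe_filter, Set.mem_setOf_eq] at hx hy
        exact Prod.ext (hx.2.trans hy.2.symm) hxy
    exact hfib
  have hfinal : (maximalPathEdgeSets G).ncard ≤ D.ncard := by
    apply ncard_le_of_rel hDfin
      (P := fun s d => ∃ (v : V) (p : G.Walk d.1 v), IsMaximalPath G p ∧
        p.getVert 1 = d.2 ∧ s = {e | e ∈ p.edges})
    · rintro s ⟨u, v, p, hmax, rfl⟩
      by_cases hu : 3 ≤ deg G u
      · have hnil : ¬ p.Nil := Walk.not_nil_iff_lt_length.mpr (by have := hmax.2.1; omega)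
        exact ⟨(u, p.getVert 1),
          ⟨by rw [← hdeg_eq]; exact hu, Walk.adj_snd hnil⟩,
          v, p, hmax, rfl, rfl⟩
      · have hv : 3 ≤ deg G v := by
          rcases hmax.2.2.2.1 with ⟨h, -⟩ | ⟨h, -⟩ | ⟨-, h⟩
          · exact absurd h hu
          · exact absurd h hu
          · exact h
        have hrev := isMaximalPath_reverse hmax
        have hnr : ¬ p.reverse.Nil := Walk.not_nil_iff_lt_length.mpr
          (by rw [Walk.length_reverse]; have := hmax.2.1; omega)
        refine ⟨(v, p.reverse.getVert 1),
          ⟨by rw [← hdeg_eq]; exact hv, Walk.adj_snd hnr⟩,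
          u, p.reverse, hrev, rfl, ?_⟩
        ext e
        simp [Walk.edges_reverse]
    · rintro s1 s2 d hd ⟨w1, p, hp, hp1, rfl⟩ ⟨w2, q, hq, hq1, rfl⟩
      rw [hD, Set.mem_setOf_eq] at hd
      have hedges := maximal_det p q hp hq (by rw [hdeg_eq]; exact hd.1)
        (hp1.trans hq1.symm)
      ext e
      simp [hedges]
  omega
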